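/- arXiv:1410.1460 — 2 statements merged into one kernel-verified Lean document; each statement's English description precedes it below -/
import Mathlib

section
/- (Theorem 5.1, zero-range system in a Jackson-type environment, closed-open network, detailed balance) Fix M ≥ 1. Suppose for every y : Λ → ℕ: (4.2a) λ_k(n_k−1;y)/μ_k(n_k;y)·β_{kl}(n_k,n_l;y) = λ_l(n_l;y)/μ_l(n_l+1;y)·β_{lk}(n_l+1,n_k−1;y) for k ≠ l, y_k = y_l = 0, n_k ≥ 1; (4.2b) λ_j(n_j−1;y)/μ_j(n_j;y)·θ_{jk}(n_j,n_k;y) = λ_k(n_k;y)/μ_k(n_k+1;y)·θ_{kj}(n_k+1,n_j−1;y) for y_j ≥ 1, y_k = 0, n_j ≥ 1; (4.3) τ_{jj'}(n;y)·∏_{q∈Λ} λ̄_q(n_q;y)/μ̄_q(n_q;y) = τ_{j'j}(n;y+e^{j→j'})·∏_{q∈Λ} λ̄_q(n_q;y+e^{j→j'})/μ̄_q(n_q;y+e^{j→j'}) for y_j ≥ 1, j' ≠ j; (5.2) λ_i(n_i−1;y)·[γ_i(n_i−1)]^{y_i}/μ_i(n_i;y)·ε_{ij}(n_i,n_j;y)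 = λ_j(n_j;y)·[γ_j(n_j)]^{y_j}/μ_j(n_j+1;y)·ε_{ji}(n_j+1,n_i−1;y) for i ≠ j, y_i ≥ 1, y_j ≥ 1, n_i ≥ 1. Then the weight w(y,n) = 1(|y| = M)·∏_{q∈Λ} [λ̄_q(n_q;y)/μ̄_q(n_q;y)]·∏_{q∈Λ} [γ̄_q(n_q)]^{y_q} satisfies the detailed balance equations: (i) w(y,n)·λ_p(n_p;y)·[γ_p(n_p)]^{y_p} = w(y, n+e^p)·μ_p(n_p+1;y) for every p ∈ Λ; (ii) w(y,n)·β_{kl}(n_k,n_l;y) = w(y, n+e^{k→l})·β_{lk}(n_l+1,n_k−1;y) for y_k = y_l = 0, k ≠ l, n_k ≥ 1; (iii) w(y,n)·ε_{ij}(n_i,n_j;y) = w(y, n+e^{i→j})·ε_{ji}(n_j+1,n_i−1;y) for y_i ≥ 1, y_j ≥ 1, i ≠ j, n_i ≥ 1; (iv) w(y,n)·θ_{jk}(n_j,n_k;y) = w(y, n+e^{j→k})·θ_{kj}(n_k+1,n_j−1;y)·[γ_j(n_j−1)]^{y_j} for y_j ≥ 1, y_k = 0, n_j ≥ 1; (v)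 w(y,n)·[γ̄_j(n_j)]^{−y_j}·τ_{jj'}(n;y)·[γ̄_{j'}(n_{j'})]^{−y_{j'}} = w(y', n)·[γ̄_j(n_j)]^{−y'_j}·τ_{j'j}(n;y')·[γ̄_{j'}(n_{j'})]^{−y'_{j'}}, where y' = y + e^{j→j'}, for y_j ≥ 1, j' ≠ j. -/
section helpers
variable {Λ : Type*} [Fintype Λ] [DecidableEq Λ]

lemma prod_split_one (F : Λ → ℝ) (k : Λ) :
    ∏ q, F q = F k * ∏ q ∈ Finset.univ.erase k, F q :=
  (Finset.mul_prod_erase Finset.univ F (Finset.mem_univ k)).symm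

lemma prod_split_two (F : Λ → ℝ) {k l : Λ} (h : l ≠ k) :
    ∏ q, F q = F k * (F l * ∏ q ∈ (Finset.univ.erase k).erase l, F q) := by
  rw [← Finset.mul_prod_erase Finset.univ F (Finset.mem_univ k),
      ← Finset.mul_prod_erase _ F (Finset.mem_erase.2 ⟨h, Finset.mem_univ l⟩)]

end helpers

/-- The `e^k` configuration increment: `n + e^k`. -/
def bump {Λ : Type*} [DecidableEq Λ] (n : Λ → ℕ) (k : Λ) : Λ → ℕ :=
  fun l => n l + (if l = k then 1 else 0)

/-- The jump move `n + e^{i→k} = n - e^i + e^k`. -/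
def move {Λ : Type*} [DecidableEq Λ] (n : Λ → ℕ) (i k : Λ) : Λ → ℕ :=
  fun l => n l - (if l = i then 1 else 0) + (if l = k then 1 else 0)

/-- Theorem 5.1, zero-range system, closed-open network, detailed
balance: under conditions (4.2), (4.3) and (5.2), the weights
`w(y,n) = 1(|y|=M) ∏_q [λ̄_q(n_q;y)/μ̄_q(n_q;y)] ∏_q [γ̄_q(n_q)]^{y_q}` satisfy
detailed balance. Here `y : Λ → ℕ` counts distinguished customers per site. -/
theorem zero_range_closed_open_detailed_balance
    (Λ : Type*) [Fintype Λ] [DecidableEq Λ] [Nonempty Λ]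
    (M : ℕ) (hM : 1 ≤ M)
    (lam mu : Λ → ℕ → (Λ → ℕ) → ℝ) (gam : Λ → ℕ → ℝ)
    (hlam : ∀ p m y, 0 ≤ lam p m y) (hmu : ∀ p m y, 0 < mu p m y)
    (hgam : ∀ p m, 0 < gam p m) (hgam0 : ∀ p, gam p 0 = 1)
    (lamBar muBar : Λ → ℕ → (Λ → ℕ) → ℝ) (gamBar : Λ → ℕ → ℝ)
    (hlamBar : ∀ p m y, lamBar p m y = ∏ u ∈ Finset.range m, lam p u y)
    (hmuBar : ∀ p m y, muBar p m y = ∏ u ∈ Finset.range m, mu p (u + 1) y)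
    (hgamBar : ∀ p m, gamBar p m = ∏ u ∈ Finset.range m, gam p u)
    (β θ ε : Λ → Λ → ℕ → ℕ → (Λ → ℕ) → ℝ) (τ : Λ → Λ → (Λ → ℕ) → (Λ → ℕ) → ℝ)
    (hβnn : ∀ k l a b y, 0 ≤ β k l a b y) (hθnn : ∀ j k a b y, 0 ≤ θ j k a b y)
    (hεnn : ∀ i j a b y, 0 ≤ ε i j a b y) (hτnn : ∀ j j' n y, 0 ≤ τ j j' n y)
    -- (4.2a)
    (h42a : ∀ (y : Λ → ℕ) (k l : Λ) (a b : ℕ),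
      k ≠ l → y k = 0 → y l = 0 → 1 ≤ a →
      lam k (a - 1) y / mu k a y * β k l a b y =
        lam l b y / mu l (b + 1) y * β l k (b + 1) (a - 1) y)
    -- (4.2b)
    (h42b : ∀ (y : Λ → ℕ) (j k : Λ) (a b : ℕ),
      1 ≤ y j → y k = 0 → 1 ≤ a →
      lam j (a - 1) y / mu j a y * θ j k a b y =
        lam k b y / mu k (b + 1) y * θ k j (b + 1) (a - 1) y)
    -- (4.3)
    (h43 : ∀ (y : Λ → ℕ) (j j' : Λ) (n : Λ → ℕ),
      1 ≤ y j → j' ≠ j →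
      τ j j' n y * ∏ q, lamBar q (n q) y / muBar q (n q) y =
        τ j' j n (move y j j') *
          ∏ q, lamBar q (n q) (move y j j') / muBar q (n q) (move y j j'))
    -- (5.2)
    (h52 : ∀ (y : Λ → ℕ) (i j : Λ) (a b : ℕ),
      i ≠ j → 1 ≤ y i → 1 ≤ y j → 1 ≤ a →
      lam i (a - 1) y * gam i (a - 1) ^ (y i) / mu i a y * ε i j a b y =
        lam j b y * gam j b ^ (y j) / mu j (b + 1) y * ε j i (b + 1) (a - 1) y)
    (w : (Λ → ℕ) → (Λ → ℕ) → ℝ)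
    (hw : ∀ (y n : Λ → ℕ), w y n =
      (if ∑ s, y s = M then (1 : ℝ) else 0) *
        (∏ q, lamBar q (n q) y / muBar q (n q) y) *
        ∏ q, gamBar q (n q) ^ (y q)) :
    ∀ (y n : Λ → ℕ),
      -- (i) arrival at p paired with exit from p
      (∀ p, w y n * (lam p (n p) y * gam p (n p) ^ (y p)) =
        w y (bump n p) * mu p (n p + 1) y) ∧
      -- (ii) task jump between unloaded sites
      (∀ k l, y k = 0 → y l = 0 → k ≠ l → 1 ≤ n k →
        w y n * β k l (n k) (n l) y =
          w y (move n k l) * β l k (n l + 1) (n k - 1) y) ∧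
      -- (iii) task jump between loaded sites
      (∀ i j, 1 ≤ y i → 1 ≤ y j → i ≠ j → 1 ≤ n i →
        w y n * ε i j (n i) (n j) y =
          w y (move n i j) * ε j i (n j + 1) (n i - 1) y) ∧
      -- (iv) task jump from a loaded to an unloaded site
      (∀ j k, 1 ≤ y j → y k = 0 → 1 ≤ n j →
        w y n * θ j k (n j) (n k) y =
          w y (move n j k) *
            (θ k j (n k + 1) (n j - 1) y * gam j (n j - 1) ^ (y j))) ∧
      -- (v) leap of a distinguished customer
      (∀ j j', 1 ≤ y j → j' ≠ j →
        w y n * (gamBar j (n j) ^ (y j))⁻¹ * τ j j' n y *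
            (gamBar j' (n j') ^ (y j'))⁻¹ =
          w (move y j j') n * (gamBar j (n j) ^ (move y j j' j))⁻¹ *
            τ j' j n (move y j j') *
            (gamBar j' (n j') ^ (move y j j' j'))⁻¹) := by
  
  have hmu0 : ∀ p m y', mu p m y' ≠ 0 := fun p m y' => (hmu p m y').ne'
  have hmuBar0 : ∀ p m y', muBar p m y' ≠ 0 := by
    intro p m y'
    rw [hmuBar]
    exact (Finset.prod_pos fun u _ => hmu p (u + 1) y').ne'
  have hgamBar0 : ∀ p m, gamBar p m ≠ 0 := by
    intro p m
    rw [hgamBar]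
    exact (Finset.prod_pos fun u _ => hgam p u).ne'
  have lamBar_succ : ∀ p m y', lamBar p (m + 1) y' = lamBar p m y' * lam p m y' := by
    intro p m y'; rw [hlamBar, hlamBar, Finset.prod_range_succ]
  have muBar_succ : ∀ p m y', muBar p (m + 1) y' = muBar p m y' * mu p (m + 1) y' := by
    intro p m y'; rw [hmuBar, hmuBar, Finset.prod_range_succ]
  have gamBar_succ : ∀ p m, gamBar p (m + 1) = gamBar p m * gam p m := by
    intro p m; rw [hgamBar, hgamBar, Finset.prod_range_succ]
  intro y n
  refine ⟨?_, ?_, ?_, ?_, ?_⟩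
  · -- (i)
    intro p
    have P1 : (∏ q, lamBar q (bump n p q) y / muBar q (bump n p q) y) =
        lamBar p (n p + 1) y / muBar p (n p + 1) y *
          ∏ q ∈ Finset.univ.erase p, lamBar q (n q) y / muBar q (n q) y := by
      rw [prod_split_one _ p]
      refine congrArg₂ (· * ·) ?_ ?_
      · simp [bump]
      · exact Finset.prod_congr rfl fun q hq => by
          simp [bump, (Finset.mem_erase.1 hq).1]
    have G1 : (∏ q, gamBar q (bump n p q) ^ (y q)) =
        gamBar p (n p + 1) ^ (y p) *
          ∏ q ∈ Finset.univ.erase p, gamBar q (n q) ^ (y q) := by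
      rw [prod_split_one _ p]
      refine congrArg₂ (· * ·) ?_ ?_
      · simp [bump]
      · exact Finset.prod_congr rfl fun q hq => by
          simp [bump, (Finset.mem_erase.1 hq).1]
    rw [hw, hw, P1, G1,
      prod_split_one (fun q => lamBar q (n q) y / muBar q (n q) y) p,
      prod_split_one (fun q => gamBar q (n q) ^ (y q)) p,
      lamBar_succ, muBar_succ, gamBar_succ, mul_pow]
    generalize (if ∑ s, y s = M then (1 : ℝ) else 0) = I
    have h1 : mu p (n p + 1) y ≠ 0 := hmu0 _ _ _
    have h2 : muBar p (n p) y ≠ 0 := hmuBar0 _ _ _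
    have h3 : (∏ x ∈ Finset.univ.erase p, muBar x (n x) y) ≠ 0 :=
      Finset.prod_ne_zero_iff.2 fun x _ => hmuBar0 _ _ _
    field_simp
  · -- (ii)
    intro k l hyk hyl hkl hnk
    obtain ⟨m, hm⟩ : ∃ m, n k = m + 1 := ⟨n k - 1, (Nat.succ_pred_eq_of_pos hnk).symm⟩
    have P1 : (∏ q, lamBar q (move n k l q) y / muBar q (move n k l q) y) =
        lamBar k (n k - 1) y / muBar k (n k - 1) y *
          (lamBar l (n l + 1) y / muBar l (n l + 1) y *
            ∏ q ∈ (Finset.univ.erase k).erase l, lamBar q (n q) y / muBar q (n q) y) := by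
      rw [prod_split_two _ (Ne.symm hkl)]
      refine congrArg₂ (· * ·) (by simp [move, hkl]) ?_
      refine congrArg₂ (· * ·) ?_ ?_
      · simp [move, Ne.symm hkl]
      · refine Finset.prod_congr rfl fun q hq => ?_
        have hql := (Finset.mem_erase.1 hq).1
        have hqk := (Finset.mem_erase.1 (Finset.mem_erase.1 hq).2).1
        simp [move, hqk, hql]
    have G1 : (∏ q, gamBar q (move n k l q) ^ (y q)) =
        ∏ q, gamBar q (n q) ^ (y q) := by
      refine Finset.prod_congr rfl fun q _ => ?_
      by_cases hqk : q = k
      · subst hqk; rw [hyk]; simp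
      by_cases hql : q = l
      · subst hql; rw [hyl]; simp
      · simp [move, hqk, hql]
    rw [hw, hw, P1, G1,
      prod_split_two (fun q => lamBar q (n q) y / muBar q (n q) y) (Ne.symm hkl), hm]
    simp only [Nat.add_sub_cancel]
    simp only [lamBar_succ, muBar_succ]
    have E := h42a y k l (m + 1) (n l) hkl hyk hyl (Nat.le_add_left 1 m)
    simp only [Nat.add_sub_cancel] at E
    linear_combination ((if ∑ s, y s = M then (1 : ℝ) else 0) *
      (lamBar k m y / muBar k m y) * (lamBar l (n l) y / muBar l (n l) y) *
      (∏ q ∈ (Finset.univ.erase k).erase l, lamBar q (n q) y / muBar q (n q) y) *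
      (∏ q, gamBar q (n q) ^ (y q))) * E
  · -- (iii)
    intro i j hyi hyj hij hni
    obtain ⟨m, hm⟩ : ∃ m, n i = m + 1 := ⟨n i - 1, (Nat.succ_pred_eq_of_pos hni).symm⟩
    have P1 : (∏ q, lamBar q (move n i j q) y / muBar q (move n i j q) y) =
        lamBar i (n i - 1) y / muBar i (n i - 1) y *
          (lamBar j (n j + 1) y / muBar j (n j + 1) y *
            ∏ q ∈ (Finset.univ.erase i).erase j, lamBar q (n q) y / muBar q (n q) y) := by
      rw [prod_split_two _ (Ne.symm hij)]
      refine congrArg₂ (· * ·) (by simp [move, hij]) ?_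
      refine congrArg₂ (· * ·) ?_ ?_
      · simp [move, Ne.symm hij]
      · refine Finset.prod_congr rfl fun q hq => ?_
        have hqj := (Finset.mem_erase.1 hq).1
        have hqi := (Finset.mem_erase.1 (Finset.mem_erase.1 hq).2).1
        simp [move, hqi, hqj]
    have G1 : (∏ q, gamBar q (move n i j q) ^ (y q)) =
        gamBar i (n i - 1) ^ (y i) *
          (gamBar j (n j + 1) ^ (y j) *
            ∏ q ∈ (Finset.univ.erase i).erase j, gamBar q (n q) ^ (y q)) := by
      rw [prod_split_two _ (Ne.symm hij)]
      refine congrArg₂ (· * ·) (by simp [move, hij]) ?_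
      refine congrArg₂ (· * ·) ?_ ?_
      · simp [move, Ne.symm hij]
      · refine Finset.prod_congr rfl fun q hq => ?_
        have hqj := (Finset.mem_erase.1 hq).1
        have hqi := (Finset.mem_erase.1 (Finset.mem_erase.1 hq).2).1
        simp [move, hqi, hqj]
    rw [hw, hw, P1, G1,
      prod_split_two (fun q => lamBar q (n q) y / muBar q (n q) y) (Ne.symm hij),
      prod_split_two (fun q => gamBar q (n q) ^ (y q)) (Ne.symm hij), hm]
    simp only [Nat.add_sub_cancel]
    simp only [lamBar_succ, muBar_succ, gamBar_succ, mul_pow]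
    have E := h52 y i j (m + 1) (n j) hij hyi hyj (Nat.le_add_left 1 m)
    simp only [Nat.add_sub_cancel] at E
    linear_combination ((if ∑ s, y s = M then (1 : ℝ) else 0) *
      (lamBar i m y / muBar i m y) * (lamBar j (n j) y / muBar j (n j) y) *
      (∏ q ∈ (Finset.univ.erase i).erase j, lamBar q (n q) y / muBar q (n q) y) *
      (gamBar i m ^ (y i)) * (gamBar j (n j) ^ (y j)) *
      (∏ q ∈ (Finset.univ.erase i).erase j, gamBar q (n q) ^ (y q))) * E
  · -- (iv)
    intro j k hyj hyk hnj
    have hjk : j ≠ k := by rintro rfl; omega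
    obtain ⟨m, hm⟩ : ∃ m, n j = m + 1 := ⟨n j - 1, (Nat.succ_pred_eq_of_pos hnj).symm⟩
    have P1 : (∏ q, lamBar q (move n j k q) y / muBar q (move n j k q) y) =
        lamBar j (n j - 1) y / muBar j (n j - 1) y *
          (lamBar k (n k + 1) y / muBar k (n k + 1) y *
            ∏ q ∈ (Finset.univ.erase j).erase k, lamBar q (n q) y / muBar q (n q) y) := by
      rw [prod_split_two _ (Ne.symm hjk)]
      refine congrArg₂ (· * ·) (by simp [move, hjk]) ?_
      refine congrArg₂ (· * ·) ?_ ?_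
      · simp [move, Ne.symm hjk]
      · refine Finset.prod_congr rfl fun q hq => ?_
        have hqk := (Finset.mem_erase.1 hq).1
        have hqj := (Finset.mem_erase.1 (Finset.mem_erase.1 hq).2).1
        simp [move, hqj, hqk]
    have G1 : (∏ q, gamBar q (move n j k q) ^ (y q)) =
        gamBar j (n j - 1) ^ (y j) *
          ∏ q ∈ Finset.univ.erase j, gamBar q (n q) ^ (y q) := by
      rw [prod_split_one _ j]
      refine congrArg₂ (· * ·) ?_ ?_
      · simp [move, hjk]
      · refine Finset.prod_congr rfl fun q hq => ?_
        have hqj := (Finset.mem_erase.1 hq).1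
        by_cases hqk : q = k
        · subst hqk; rw [hyk]; simp
        · simp [move, hqj, hqk]
    rw [hw, hw, P1, G1,
      prod_split_two (fun q => lamBar q (n q) y / muBar q (n q) y) (Ne.symm hjk),
      prod_split_one (fun q => gamBar q (n q) ^ (y q)) j, hm]
    simp only [Nat.add_sub_cancel]
    simp only [lamBar_succ, muBar_succ, gamBar_succ, mul_pow]
    have E := h42b y j k (m + 1) (n k) hyj hyk (Nat.le_add_left 1 m)
    simp only [Nat.add_sub_cancel] at E
    linear_combination ((if ∑ s, y s = M then (1 : ℝ) else 0) *
      (lamBar j m y / muBar j m y) * (lamBar k (n k) y / muBar k (n k) y) *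
      (∏ q ∈ (Finset.univ.erase j).erase k, lamBar q (n q) y / muBar q (n q) y) *
      (gamBar j m ^ (y j)) * (gam j m ^ (y j)) *
      (∏ q ∈ Finset.univ.erase j, gamBar q (n q) ^ (y q))) * E
  · -- (v)
    intro j j' hyj hjj'
    have hjne : j ≠ j' := Ne.symm hjj'
    have hmj : move y j j' j = y j - 1 := by simp [move, hjne]
    have hmj' : move y j j' j' = y j' + 1 := by simp [move, hjj']
    have hsum : ∑ s, move y j j' s = ∑ s, y s := by
      have h1 : ∀ s, move y j j' s + (if s = j then 1 else 0) =
          y s + (if s = j' then 1 else 0) := by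
        intro s
        by_cases hsj : s = j
        · subst hsj; simp [move, hjne]; omega
        · by_cases hsj' : s = j'
          · subst hsj'; simp [move, hjj']
          · simp [move, hsj, hsj']
      have h2 : ∑ s, (move y j j' s + (if s = j then 1 else 0)) =
          ∑ s, (y s + (if s = j' then 1 else 0)) :=
        Finset.sum_congr rfl fun s _ => h1 s
      simp only [Finset.sum_add_distrib, Finset.sum_ite_eq', Finset.mem_univ,
        if_true] at h2
      omega
    have G0 : (∏ q, gamBar q (n q) ^ (y q)) =
        gamBar j (n j) ^ (y j) *
          (gamBar j' (n j') ^ (y j') *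
            ∏ q ∈ (Finset.univ.erase j).erase j', gamBar q (n q) ^ (y q)) :=
      prod_split_two _ hjj'
    have G1 : (∏ q, gamBar q (n q) ^ (move y j j' q)) =
        gamBar j (n j) ^ (y j - 1) *
          (gamBar j' (n j') ^ (y j' + 1) *
            ∏ q ∈ (Finset.univ.erase j).erase j', gamBar q (n q) ^ (y q)) := by
      rw [prod_split_two _ hjj']
      refine congrArg₂ (· * ·) (by rw [hmj]) ?_
      refine congrArg₂ (· * ·) ?_ ?_
      · rw [hmj']
      · refine Finset.prod_congr rfl fun q hq => ?_
        have hqj' := (Finset.mem_erase.1 hq).1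
        have hqj := (Finset.mem_erase.1 (Finset.mem_erase.1 hq).2).1
        simp [move, hqj, hqj']
    have key : ∀ (c A T t a' b' : ℝ), a' ≠ 0 → b' ≠ 0 →
        c * A * (a' * (b' * T)) * a'⁻¹ * t * b'⁻¹ = c * T * (t * A) := by
      intro c A T t a' b' ha hb
      field_simp
    rw [hw, hw, hsum, G0, G1, hmj, hmj',
      key _ _ _ _ _ _ (pow_ne_zero (y j) (hgamBar0 j (n j)))
        (pow_ne_zero (y j') (hgamBar0 j' (n j'))),
      key _ _ _ _ _ _ (pow_ne_zero (y j - 1) (hgamBar0 j (n j)))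
        (pow_ne_zero (y j' + 1) (hgamBar0 j' (n j'))),
      h43 y j j' n hyj hjj']
end

section
/- (Theorem 5.2, zero-range system, open-open network, detailed balance) Suppose: the product V(n) = ∏_{q∈Λ} λ̄_q(n_q;y)/μ̄_q(n_q;y) does not depend on the configuration y : Λ → ℕ (condition 4.10); condition (4.2a) λ_k(n_k−1;y)/μ_k(n_k;y)·β_{kl}(n_k,n_l;y) = λ_l(n_l;y)/μ_l(n_l+1;y)·β_{lk}(n_l+1,n_k−1;y) for k ≠ l, y_k = y_l = 0, n_k ≥ 1; condition (4.2b) λ_j(n_j−1;y)/μ_j(n_j;y)·θ_{jk}(n_j,n_k;y) = λ_k(n_k;y)/μ_k(n_k+1;y)·θ_{kj}(n_k+1,n_j−1;y) for y_j ≥ 1, y_k = 0, n_j ≥ 1; condition (5.2) λ_i(n_i−1;y)·[γ_i(n_i−1)]^{y_i}/μ_i(n_i;y)·ε_{ij}(n_i,n_j;y) = λ_j(n_j;y)·[γ_j(n_j)]^{y_j}/μ_j(n_j+1;y)·ε_{ji}(n_j+1,n_i−1;y) for i ≠ j, y_i ≥ 1, y_j ≥ 1, n_i ≥ 1; and condition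 (4.11) τ_{jj'}(n;y)·ξ_j/η_j = τ_{j'j}(n;y+e^{j→j'})·ξ_{j'}/η_{j'} for y_j ≥ 1, j' ≠ j. Then the weight w(y,n) = V(n)·∏_{q∈Λ} [ξ_q γ̄_q(n_q)/η_q]^{y_q} satisfies the detailed balance equations: (i) w(y,n)·λ_p(n_p;y)·[γ_p(n_p)]^{y_p} = w(y, n+e^p)·μ_p(n_p+1;y) for every p ∈ Λ; (ii) w(y,n)·β_{kl}(n_k,n_l;y) = w(y, n+e^{k→l})·β_{lk}(n_l+1,n_k−1;y) for y_k = y_l = 0, k ≠ l, n_k ≥ 1; (iii) w(y,n)·ε_{ij}(n_i,n_j;y) = w(y, n+e^{i→j})·ε_{ji}(n_j+1,n_i−1;y) for y_i ≥ 1, y_j ≥ 1, i ≠ j, n_i ≥ 1; (iv) w(y,n)·θ_{jk}(n_j,n_k;y) = w(y, n+e^{j→k})·θ_{kj}(n_k+1,n_j−1;y)·[γ_j(n_j−1)]^{y_j} for y_j ≥ 1, y_k = 0, n_j ≥ 1; (v) w(y,n)·[γ̄_j(n_j)]^{−y_j}·τ_{jj'}(n;y)·[γ̄_{j'}(n_{j'})]^{−y_{j'}}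 = w(y', n)·[γ̄_j(n_j)]^{−y'_j}·τ_{j'j}(n;y')·[γ̄_{j'}(n_{j'})]^{−y'_{j'}}, where y' = y + e^{j→j'}, for y_j ≥ 1, j' ≠ j; (vi) w(y,n)·ξ_p γ̄_p(n_p) = w(y+e^p, n)·η_p for every p ∈ Λ (arrival of a distinguished customer at p paired with its exit). -/
private lemma prodSplit1 {Λ : Type*} [Fintype Λ] [DecidableEq Λ] (f : Λ → ℝ) (i : Λ) :
    ∏ q, f q = f i * ∏ q ∈ ({i} : Finset Λ)ᶜ, f q := by
  rw [← Finset.prod_mul_prod_compl ({i} : Finset Λ) f, Finset.prod_singleton]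

private lemma prodSplit2 {Λ : Type*} [Fintype Λ] [DecidableEq Λ] (f : Λ → ℝ) (i k : Λ)
    (h : i ≠ k) :
    ∏ q, f q = f i * f k * ∏ q ∈ ({i, k} : Finset Λ)ᶜ, f q := by
  rw [← Finset.prod_mul_prod_compl ({i, k} : Finset Λ) f, Finset.prod_pair h]

private lemma balance_of {Wn Wm X₁ X₂ b b' : ℝ}
    (hE1 : Wm * X₁ = Wn * X₂) (hE2 : X₁ * b = X₂ * b')
    (h0 : X₁ = 0 → Wn = 0 ∧ (X₂ = 0 → Wm = 0)) :
    Wn * b = Wm * b' := by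
  by_cases hX : X₁ = 0
  · obtain ⟨hWn, h2⟩ := h0 hX
    rw [hX, zero_mul] at hE2
    rcases mul_eq_zero.mp hE2.symm with hX2 | hb'
    · rw [hWn, h2 hX2, zero_mul, zero_mul]
    · rw [hWn, hb', zero_mul, mul_zero]
  · refine mul_right_cancel₀ hX ?_
    linear_combination Wn * hE2 + b' * hE1.symm

/-- Theorem 5.2, zero-range system, open-open network, detailed
balance: under conditions (4.10), (4.2), (5.2) and (4.11), the weights
`w(y,n) = V(n) ∏_q [ξ_q γ̄_q(n_q)/η_q]^{y_q}` satisfy detailed balance. Here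
`y : Λ → ℕ` counts distinguished customers per site. -/
theorem zero_range_open_open_detailed_balance
    (Λ : Type*) [Fintype Λ] [DecidableEq Λ] [Nonempty Λ]
    (lam mu : Λ → ℕ → (Λ → ℕ) → ℝ) (gam : Λ → ℕ → ℝ)
    (hlam : ∀ p m y, 0 ≤ lam p m y) (hmu : ∀ p m y, 0 < mu p m y)
    (hgam : ∀ p m, 0 < gam p m) (hgam0 : ∀ p, gam p 0 = 1)
    (lamBar muBar : Λ → ℕ → (Λ → ℕ) → ℝ) (gamBar : Λ → ℕ → ℝ)
    (hlamBar : ∀ p m y, lamBar p m y = ∏ u ∈ Finset.range m, lam p u y)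
    (hmuBar : ∀ p m y, muBar p m y = ∏ u ∈ Finset.range m, mu p (u + 1) y)
    (hgamBar : ∀ p m, gamBar p m = ∏ u ∈ Finset.range m, gam p u)
    (β θ ε : Λ → Λ → ℕ → ℕ → (Λ → ℕ) → ℝ) (τ : Λ → Λ → (Λ → ℕ) → (Λ → ℕ) → ℝ)
    (hβnn : ∀ k l a b y, 0 ≤ β k l a b y) (hθnn : ∀ j k a b y, 0 ≤ θ j k a b y)
    (hεnn : ∀ i j a b y, 0 ≤ ε i j a b y) (hτnn : ∀ j j' n y, 0 ≤ τ j j' n y)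
    (ξ η : Λ → ℝ) (hξ : ∀ p, 0 < ξ p) (hη : ∀ p, 0 < η p)
    -- (4.10): V(n) does not depend on y
    (V : (Λ → ℕ) → ℝ)
    (hV : ∀ (y : Λ → ℕ) (n : Λ → ℕ),
      V n = ∏ q, lamBar q (n q) y / muBar q (n q) y)
    -- (4.2a)
    (h42a : ∀ (y : Λ → ℕ) (k l : Λ) (a b : ℕ),
      k ≠ l → y k = 0 → y l = 0 → 1 ≤ a →
      lam k (a - 1) y / mu k a y * β k l a b y =
        lam l b y / mu l (b + 1) y * β l k (b + 1) (a - 1) y)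
    -- (4.2b)
    (h42b : ∀ (y : Λ → ℕ) (j k : Λ) (a b : ℕ),
      1 ≤ y j → y k = 0 → 1 ≤ a →
      lam j (a - 1) y / mu j a y * θ j k a b y =
        lam k b y / mu k (b + 1) y * θ k j (b + 1) (a - 1) y)
    -- (5.2)
    (h52 : ∀ (y : Λ → ℕ) (i j : Λ) (a b : ℕ),
      i ≠ j → 1 ≤ y i → 1 ≤ y j → 1 ≤ a →
      lam i (a - 1) y * gam i (a - 1) ^ (y i) / mu i a y * ε i j a b y =
        lam j b y * gam j b ^ (y j) / mu j (b + 1) y * ε j i (b + 1) (a - 1) y)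
    -- (4.11)
    (h411 : ∀ (y : Λ → ℕ) (j j' : Λ) (n : Λ → ℕ),
      1 ≤ y j → j' ≠ j →
      τ j j' n y * ξ j / η j = τ j' j n (move y j j') * ξ j' / η j')
    (w : (Λ → ℕ) → (Λ → ℕ) → ℝ)
    (hw : ∀ (y n : Λ → ℕ), w y n =
      V n * ∏ q, (ξ q * gamBar q (n q) / η q) ^ (y q)) :
    ∀ (y n : Λ → ℕ),
      -- (i) arrival at p paired with exit from p
      (∀ p, w y n * (lam p (n p) y * gam p (n p) ^ (y p)) =
        w y (bump n p) * mu p (n p + 1) y) ∧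
      -- (ii) task jump between unloaded sites
      (∀ k l, y k = 0 → y l = 0 → k ≠ l → 1 ≤ n k →
        w y n * β k l (n k) (n l) y =
          w y (move n k l) * β l k (n l + 1) (n k - 1) y) ∧
      -- (iii) task jump between loaded sites
      (∀ i j, 1 ≤ y i → 1 ≤ y j → i ≠ j → 1 ≤ n i →
        w y n * ε i j (n i) (n j) y =
          w y (move n i j) * ε j i (n j + 1) (n i - 1) y) ∧
      -- (iv) task jump from a loaded to an unloaded site
      (∀ j k, 1 ≤ y j → y k = 0 → 1 ≤ n j →
        w y n * θ j k (n j) (n k) y =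
          w y (move n j k) *
            (θ k j (n k + 1) (n j - 1) y * gam j (n j - 1) ^ (y j))) ∧
      -- (v) leap of a distinguished customer
      (∀ j j', 1 ≤ y j → j' ≠ j →
        w y n * (gamBar j (n j) ^ (y j))⁻¹ * τ j j' n y *
            (gamBar j' (n j') ^ (y j'))⁻¹ =
          w (move y j j') n * (gamBar j (n j) ^ (move y j j' j))⁻¹ *
            τ j' j n (move y j j') *
            (gamBar j' (n j') ^ (move y j j' j'))⁻¹) ∧
      -- (vi) arrival of a distinguished customer paired with its exit
      (∀ p, w y n * (ξ p * gamBar p (n p)) = w (bump y p) n * η p) := by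
  intro y n
  have hmu' : ∀ p m (y' : Λ → ℕ), mu p m y' ≠ 0 := fun p m y' => (hmu p m y').ne'
  have hη' : ∀ p, η p ≠ 0 := fun p => (hη p).ne'
  have hξ' : ∀ p, ξ p ≠ 0 := fun p => (hξ p).ne'
  have hmuBar' : ∀ p m (y' : Λ → ℕ), muBar p m y' ≠ 0 := by
    intro p m y'
    rw [hmuBar]
    exact (Finset.prod_pos fun u _ => hmu p (u + 1) y').ne'
  have hgamBar' : ∀ p m, gamBar p m ≠ 0 := by
    intro p m
    rw [hgamBar]
    exact (Finset.prod_pos fun u _ => hgam p u).ne'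
  have hlamBar_succ : ∀ p m (y' : Λ → ℕ),
      lamBar p (m + 1) y' = lamBar p m y' * lam p m y' := by
    intro p m y'; rw [hlamBar, hlamBar, Finset.prod_range_succ]
  have hmuBar_succ : ∀ p m (y' : Λ → ℕ),
      muBar p (m + 1) y' = muBar p m y' * mu p (m + 1) y' := by
    intro p m y'; rw [hmuBar, hmuBar, Finset.prod_range_succ]
  have hgamBar_succ : ∀ p m, gamBar p (m + 1) = gamBar p m * gam p m := by
    intro p m; rw [hgamBar, hgamBar, Finset.prod_range_succ]
  set F : Λ → ℕ → ℝ :=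
    fun q m => lamBar q m y / muBar q m y * (ξ q * gamBar q m / η q) ^ (y q) with hF
  have hwF : ∀ n' : Λ → ℕ, w y n' = ∏ q, F q (n' q) := by
    intro n'
    rw [hw, hV y, ← Finset.prod_mul_distrib]
  have hsite : ∀ p m,
      F p (m + 1) * mu p (m + 1) y = F p m * (lam p m y * gam p m ^ (y p)) := by
    intro p m
    have e : ξ p * gamBar p (m + 1) / η p = (ξ p * gamBar p m / η p) * gam p m := by
      rw [hgamBar_succ]
      field_simp
    simp only [hF, hlamBar_succ, hmuBar_succ, e, mul_pow]
    have hne := hmu' p (m + 1) y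
    have hne2 := hmuBar' p m y
    field_simp [hne, hne2]
  have hWzero : ∀ (n' : Λ → ℕ) (p : Λ), lamBar p (n' p) y = 0 → w y n' = 0 := by
    intro n' p hp
    rw [hwF]
    refine Finset.prod_eq_zero (Finset.mem_univ p) ?_
    simp [hF, hp]
  have key1 : ∀ p, w y (bump n p) * mu p (n p + 1) y
      = w y n * (lam p (n p) y * gam p (n p) ^ (y p)) := by
    intro p
    rw [hwF, hwF, prodSplit1 (fun q => F q (bump n p q)) p,
      prodSplit1 (fun q => F q (n q)) p]
    have ec : ∏ q ∈ ({p} : Finset Λ)ᶜ, F q (bump n p q)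
        = ∏ q ∈ ({p} : Finset Λ)ᶜ, F q (n q) := by
      refine Finset.prod_congr rfl fun q hq => ?_
      have hq' : q ≠ p := by simpa using hq
      simp [bump, hq']
    have hb : bump n p p = n p + 1 := by simp [bump]
    rw [ec, hb]
    linear_combination (∏ q ∈ ({p} : Finset Λ)ᶜ, F q (n q)) * hsite p (n p)
  have key2 : ∀ i k, i ≠ k → 1 ≤ n i →
      w y (move n i k) *
        (lam i (n i - 1) y * gam i (n i - 1) ^ (y i) * mu k (n k + 1) y)
      = w y n * (lam k (n k) y * gam k (n k) ^ (y k) * mu i (n i) y) := by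
    intro i k hik hni
    rw [hwF, hwF, prodSplit2 (fun q => F q (move n i k q)) i k hik,
      prodSplit2 (fun q => F q (n q)) i k hik]
    have ec : ∏ q ∈ ({i, k} : Finset Λ)ᶜ, F q (move n i k q)
        = ∏ q ∈ ({i, k} : Finset Λ)ᶜ, F q (n q) := by
      refine Finset.prod_congr rfl fun q hq => ?_
      simp only [Finset.mem_compl, Finset.mem_insert, Finset.mem_singleton, not_or] at hq
      simp [move, hq.1, hq.2]
    have hmi : move n i k i = n i - 1 := by simp [move, hik]
    have hmk : move n i k k = n k + 1 := by simp [move, Ne.symm hik]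
    rw [ec, hmi, hmk]
    have A1 : F i (n i) * mu i (n i) y
        = F i (n i - 1) * (lam i (n i - 1) y * gam i (n i - 1) ^ (y i)) := by
      have e : n i - 1 + 1 = n i := by omega
      have h := hsite i (n i - 1)
      rw [e] at h
      exact h
    have A2 := hsite k (n k)
    set C := ∏ q ∈ ({i, k} : Finset Λ)ᶜ, F q (n q) with hC
    linear_combination
      (-(C * (F k (n k) * (lam k (n k) y * gam k (n k) ^ (y k))))) * A1 +
      (C * (F i (n i - 1) * (lam i (n i - 1) y * gam i (n i - 1) ^ (y i)))) * A2
  refine ⟨fun p => (key1 p).symm, ?_, ?_, ?_, ?_, ?_⟩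
  · -- (ii)
    intro k l hyk hyl hkl hnk
    have h := h42a y k l (n k) (n l) hkl hyk hyl hnk
    rw [div_mul_eq_mul_div, div_mul_eq_mul_div,
      div_eq_div_iff (hmu' k (n k) y) (hmu' l (n l + 1) y)] at h
    refine balance_of (key2 k l hkl hnk) ?_ ?_
    · simp only [hyk, hyl, pow_zero, mul_one]
      linear_combination h
    · intro hX
      have hlk : lam k (n k - 1) y = 0 := by
        have h1 : gam k (n k - 1) ^ (y k) ≠ 0 := pow_ne_zero _ (hgam k _).ne'
        have h2 : mu l (n l + 1) y ≠ 0 := hmu' l _ y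
        simpa [mul_eq_zero, h1, h2] using hX
      constructor
      · refine hWzero n k ?_
        have e : n k = (n k - 1) + 1 := by omega
        rw [e, hlamBar_succ, hlk, mul_zero]
      · intro hX2
        have hll : lam l (n l) y = 0 := by
          have h1 : gam l (n l) ^ (y l) ≠ 0 := pow_ne_zero _ (hgam l _).ne'
          have h2 : mu k (n k) y ≠ 0 := hmu' k _ y
          simpa [mul_eq_zero, h1, h2] using hX2
        refine hWzero (move n k l) l ?_
        have e : move n k l l = n l + 1 := by simp [move, Ne.symm hkl]
        rw [e, hlamBar_succ, hll, mul_zero]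
  · -- (iii)
    intro i j hyi hyj hij hni
    have h := h52 y i j (n i) (n j) hij hyi hyj hni
    rw [div_mul_eq_mul_div, div_mul_eq_mul_div,
      div_eq_div_iff (hmu' i (n i) y) (hmu' j (n j + 1) y)] at h
    refine balance_of (key2 i j hij hni) ?_ ?_
    · linear_combination h
    · intro hX
      have hli : lam i (n i - 1) y = 0 := by
        have h1 : gam i (n i - 1) ^ (y i) ≠ 0 := pow_ne_zero _ (hgam i _).ne'
        have h2 : mu j (n j + 1) y ≠ 0 := hmu' j _ y
        simpa [mul_eq_zero, h1, h2] using hX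
      constructor
      · refine hWzero n i ?_
        have e : n i = (n i - 1) + 1 := by omega
        rw [e, hlamBar_succ, hli, mul_zero]
      · intro hX2
        have hlj : lam j (n j) y = 0 := by
          have h1 : gam j (n j) ^ (y j) ≠ 0 := pow_ne_zero _ (hgam j _).ne'
          have h2 : mu i (n i) y ≠ 0 := hmu' i _ y
          simpa [mul_eq_zero, h1, h2] using hX2
        refine hWzero (move n i j) j ?_
        have e : move n i j j = n j + 1 := by simp [move, Ne.symm hij]
        rw [e, hlamBar_succ, hlj, mul_zero]
  · -- (iv)
    intro j k hyj hyk hnj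
    have hjk : j ≠ k := by
      intro hmm
      rw [hmm] at hyj
      omega
    have h := h42b y j k (n j) (n k) hyj hyk hnj
    rw [div_mul_eq_mul_div, div_mul_eq_mul_div,
      div_eq_div_iff (hmu' j (n j) y) (hmu' k (n k + 1) y)] at h
    refine balance_of (key2 j k hjk hnj) ?_ ?_
    · simp only [hyk, pow_zero, mul_one]
      linear_combination gam j (n j - 1) ^ (y j) * h
    · intro hX
      have hlj : lam j (n j - 1) y = 0 := by
        have h1 : gam j (n j - 1) ^ (y j) ≠ 0 := pow_ne_zero _ (hgam j _).ne'
        have h2 : mu k (n k + 1) y ≠ 0 := hmu' k _ y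
        simpa [mul_eq_zero, h1, h2] using hX
      constructor
      · refine hWzero n j ?_
        have e : n j = (n j - 1) + 1 := by omega
        rw [e, hlamBar_succ, hlj, mul_zero]
      · intro hX2
        have hlk : lam k (n k) y = 0 := by
          have h1 : gam k (n k) ^ (y k) ≠ 0 := pow_ne_zero _ (hgam k _).ne'
          have h2 : mu j (n j) y ≠ 0 := hmu' j _ y
          simpa [mul_eq_zero, h1, h2] using hX2
        refine hWzero (move n j k) k ?_
        have e : move n j k k = n k + 1 := by simp [move, Ne.symm hjk]
        rw [e, hlamBar_succ, hlk, mul_zero]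
  · -- (v)
    intro j j' hyj hjj'
    have hjj : j ≠ j' := Ne.symm hjj'
    have hmj : move y j j' j = y j - 1 := by simp [move, hjj]
    have hmj' : move y j j' j' = y j' + 1 := by simp [move, hjj']
    rw [hw y n, hw (move y j j') n, hmj, hmj',
      prodSplit2 (fun q => (ξ q * gamBar q (n q) / η q) ^ (y q)) j j' hjj,
      prodSplit2 (fun q => (ξ q * gamBar q (n q) / η q) ^ (move y j j' q)) j j' hjj]
    have ec : ∏ q ∈ ({j, j'} : Finset Λ)ᶜ, (ξ q * gamBar q (n q) / η q) ^ (move y j j' q)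
        = ∏ q ∈ ({j, j'} : Finset Λ)ᶜ, (ξ q * gamBar q (n q) / η q) ^ (y q) := by
      refine Finset.prod_congr rfl fun q hq => ?_
      simp only [Finset.mem_compl, Finset.mem_insert, Finset.mem_singleton, not_or] at hq
      simp [move, hq.1, hq.2]
    rw [ec, hmj, hmj']
    obtain ⟨t, ht⟩ : ∃ t, y j = t + 1 := ⟨y j - 1, by omega⟩
    rw [ht]
    simp only [Nat.add_sub_cancel]
    have hτ := h411 y j j' n hyj hjj'
    have key : ∀ (p : Λ) (k : ℕ),
        (ξ p * gamBar p (n p) / η p) ^ k * (gamBar p (n p) ^ k)⁻¹ = (ξ p / η p) ^ k := by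
      intro p k
      rw [← div_eq_mul_inv, ← div_pow]
      congr 1
      field_simp
      rw [← div_div, mul_div_assoc,
        div_self (hgamBar' p (n p)), mul_one]
    set C := ∏ q ∈ ({j, j'} : Finset Λ)ᶜ, (ξ q * gamBar q (n q) / η q) ^ (y q) with hC
    set T := τ j j' n y
    set T' := τ j' j n (move y j j')
    have E1 := key j (t + 1)
    have E2 := key j' (y j')
    have E3 := key j t
    have E4 := key j' (y j' + 1)
    linear_combination
      (V n * C * T * (ξ j' * gamBar j' (n j') / η j') ^ (y j') *
        (gamBar j' (n j') ^ (y j'))⁻¹) * E1 +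
      (V n * C * T * (ξ j / η j) ^ (t + 1)) * E2 -
      (V n * C * T' * (ξ j' * gamBar j' (n j') / η j') ^ (y j' + 1) *
        (gamBar j' (n j') ^ (y j' + 1))⁻¹) * E3 -
      (V n * C * T' * (ξ j / η j) ^ t) * E4 +
      (V n * C * (ξ j / η j) ^ t * (ξ j' / η j') ^ (y j')) * hτ
  · -- (vi)
    intro p
    rw [hw y n, hw (bump y p) n,
      prodSplit1 (fun q => (ξ q * gamBar q (n q) / η q) ^ (y q)) p,
      prodSplit1 (fun q => (ξ q * gamBar q (n q) / η q) ^ (bump y p q)) p]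
    have ec : ∏ q ∈ ({p} : Finset Λ)ᶜ, (ξ q * gamBar q (n q) / η q) ^ (bump y p q)
        = ∏ q ∈ ({p} : Finset Λ)ᶜ, (ξ q * gamBar q (n q) / η q) ^ (y q) := by
      refine Finset.prod_congr rfl fun q hq => ?_
      have hq' : q ≠ p := by simpa using hq
      simp [bump, hq']
    have hb : bump y p p = y p + 1 := by simp [bump]
    rw [ec, hb, pow_succ]
    have e : (ξ p * gamBar p (n p) / η p) * η p = ξ p * gamBar p (n p) :=
      div_mul_cancel₀ _ (hη' p)
    linear_combination
      (V n * (∏ q ∈ ({p} : Finset Λ)ᶜ, (ξ q * gamBar q (n q) / η q) ^ (y q)) *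
        (ξ p * gamBar p (n p) / η p) ^ (y p)) * e.symm
end
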